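/- None of the words d_n (n ≥ 2) is a factor of the Fibonacci word, where d_n = 1 p_n 1 for even n and d_n = 0 p_n 0 for odd n, and p_n is the (n)-th bispecial factor of the Fibonacci word. -/

import Mathlib

/-- The Fibonacci morphism on letters: φ(0)=01, φ(1)=0 (0 = `false`, 1 = `true`). -/
def phi : Bool → List Bool
  | false => [false, true]
  | true  => [false]

/-- The Fibonacci morphism extended to words. -/
def phiW (w : List Bool) : List Bool := w.flatMap phi

lemma phiW_nil : phiW [] = [] := rfl
lemma phiW_cons (a : Bool) (w : List Bool) : phiW (a::w) = phi a ++ phiW w := rfl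
lemma phiW_append (u v : List Bool) : phiW (u++v) = phiW u ++ phiW v := by
  simp [phiW, List.flatMap_append]

lemma phiW_head (a : Bool) (v : List Bool) : ∃ t, phiW (a::v) = false :: t := by
  cases a <;> simp [phiW_cons, phi]

/-- Block synchronization lemma. -/
lemma phiW_split : ∀ (w z y : List Bool), phiW w = z ++ y →
    (y = [] ∨ y.head? = some false ∨ z.getLast? = some true) →
    ∃ u v, w = u ++ v ∧ phiW u = z ∧ phiW v = y := by
  intro w
  induction w with
  | nil =>
    intro z y h _
    rw [phiW_nil] at h
    obtain ⟨hz, hy⟩ := List.append_eq_nil_iff.mp h.symm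
    exact ⟨[], [], rfl, by simp [phiW_nil, hz], by simp [phiW_nil, hy]⟩
  | cons a w' IH =>
    intro z y h hc
    match z with
    | [] => exact ⟨[], a::w', rfl, rfl, by simpa using h⟩
    | [c] =>
      cases a with
      | true =>
        rw [phiW_cons] at h
        simp only [phi, List.singleton_append, List.cons.injEq] at h
        obtain ⟨hc1, hy⟩ := h
        subst hc1
        exact ⟨[true], w', rfl, rfl, hy⟩
      | false =>
        rw [phiW_cons] at h
        simp only [phi, List.cons_append, List.nil_append, List.cons.injEq] at h
        obtain ⟨hc1, hy⟩ := h
        subst hc1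
        exfalso
        rcases hc with h1 | h2 | h3
        · rw [h1] at hy; exact absurd hy (by simp)
        · rw [← hy] at h2; simp at h2
        · simp at h3
    | c1::c2::z' =>
      cases a with
      | true =>
        rw [phiW_cons] at h
        simp only [phi, List.singleton_append, List.cons_append, List.cons.injEq] at h
        obtain ⟨hc1, hrest⟩ := h
        subst hc1
        obtain ⟨u, v, hw, hu, hv⟩ := IH (c2::z') y (by simpa using hrest) (by
          rcases hc with h1|h2|h3
          · exact Or.inl h1
          · exact Or.inr (Or.inl h2)
          · right; right; rwa [List.getLast?_cons_cons] at h3)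
        exact ⟨true::u, v, by simp [hw], by rw [phiW_cons, hu]; rfl, hv⟩
      | false =>
        rw [phiW_cons] at h
        simp only [phi, List.cons_append, List.nil_append, List.cons.injEq] at h
        obtain ⟨hc1, hc2, hrest⟩ := h
        subst hc1; subst hc2
        match z' with
        | [] =>
          exact ⟨[false], w', rfl, rfl, by simpa using hrest⟩
        | d::z'' =>
          obtain ⟨u, v, hw, hu, hv⟩ := IH (d::z'') y (by simpa using hrest) (by
            rcases hc with h1|h2|h3
            · exact Or.inl h1
            · exact Or.inr (Or.inl h2)
            · right; right; rwa [List.getLast?_cons_cons, List.getLast?_cons_cons] at h3)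
          exact ⟨false::u, v, by simp [hw], by rw [phiW_cons, hu]; rfl, hv⟩

lemma phiW_inj : ∀ v1 v2 : List Bool, phiW v1 = phiW v2 → v1 = v2 := by
  intro v1
  induction v1 with
  | nil =>
    intro v2 h
    cases v2 with
    | nil => rfl
    | cons b v2' =>
      obtain ⟨t, ht⟩ := phiW_head b v2'
      rw [phiW_nil, ht] at h; exact absurd h (by simp)
  | cons a v1' IH =>
    intro v2 h
    cases v2 with
    | nil =>
      obtain ⟨t, ht⟩ := phiW_head a v1'
      rw [phiW_nil, ht] at h; exact absurd h (by simp)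
    | cons b v2' =>
      rw [phiW_cons, phiW_cons] at h
      cases a <;> cases b <;> simp only [phi, List.cons_append, List.nil_append,
        List.cons.injEq] at h
      · rw [IH v2' h.2.2]
      · exfalso
        cases v2' with
        | nil => simp [phiW_nil] at h
        | cons c v2'' =>
          obtain ⟨t, ht⟩ := phiW_head c v2''
          rw [ht] at h; simp at h
      · exfalso
        cases v1' with
        | nil => simp [phiW_nil] at h
        | cons c v1'' =>
          obtain ⟨t, ht⟩ := phiW_head c v1''
          rw [ht] at h; simp at h
      · rw [IH v2' h.2]

lemma no11 (w x y : List Bool) : phiW w ≠ x ++ true::true::y := by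
  intro h
  have h' : phiW w = (x ++ [true]) ++ (true :: y) := by simp [h]
  obtain ⟨u, v, hw, hu, hv⟩ := phiW_split w (x ++ [true]) (true::y) h'
    (Or.inr (Or.inr (by simp)))
  cases v with
  | nil => rw [phiW_nil] at hv; exact absurd hv (by simp)
  | cons c v' =>
    obtain ⟨t, ht⟩ := phiW_head c v'
    rw [ht] at hv; simp at hv

/-- The finite Fibonacci words: `fibw n = φ^{n-1}(0)` for `n ≥ 1`. -/
def fibw (n : ℕ) : List Bool := phiW^[n - 1] [false]

/-- The bispecial factors of the Fibonacci word. -/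
def pbis (n : ℕ) : List Bool := (fibw n).dropLast.dropLast

/-- The minimal forbidden words of the Fibonacci word:
`d n = 1 p_n 1` for even `n`, `d n = 0 p_n 0` for odd `n`. -/
def dF (n : ℕ) : List Bool :=
  if n % 2 = 0 then [true] ++ pbis n ++ [true] else [false] ++ pbis n ++ [false]

lemma fibw_succ (n : ℕ) (h : 1 ≤ n) : fibw (n+1) = phiW (fibw n) := by
  obtain ⟨m, rfl⟩ : ∃ m, n = m + 1 := ⟨n - 1, by omega⟩
  show phiW^[m+1+1-1] [false] = phiW (phiW^[m+1-1] [false])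
  simp only [Nat.add_sub_cancel]
  rw [Function.iterate_succ_apply' phiW m [false]]

lemma fibw_eq (k : ℕ) :
    fibw (k+2) = pbis (k+2) ++ (if k % 2 = 0 then [false,true] else [true,false]) := by
  suffices h : ∃ q, fibw (k+2) = q ++ (if k % 2 = 0 then [false,true] else [true,false]) by
    obtain ⟨q, hq⟩ := h
    have hp : pbis (k+2) = q := by
      unfold pbis
      rw [hq]
      split <;> 
      · show (q ++ [_, _]).dropLast.dropLast = q
        rw [show ∀ (a b : Bool), q ++ [a,b] = (q ++ [a]) ++ [b] from by simp]
        rw [List.dropLast_concat, List.dropLast_concat]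
    rw [hp]; exact hq
  induction k with
  | zero => exact ⟨[], by norm_num; rfl⟩
  | succ k IH =>
    obtain ⟨q, hq⟩ := IH
    have h1 : fibw (k+3) = phiW (fibw (k+2)) := fibw_succ (k+2) (by omega)
    rcases Nat.even_or_odd k with he | ho
    · have hk : k % 2 = 0 := Nat.even_iff.mp he
      have hk1 : (k+1) % 2 = 1 := by omega
      refine ⟨phiW q ++ [false], ?_⟩
      rw [hk1]; norm_num
      rw [h1, hq, hk]; norm_num
      rw [phiW_append]
      simp [phiW_cons, phiW_nil, phi]
    · have hk : k % 2 = 1 := Nat.odd_iff.mp ho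
      have hk1 : (k+1) % 2 = 0 := by omega
      refine ⟨phiW q ++ [false], ?_⟩
      rw [hk1]; norm_num
      rw [h1, hq, hk]; norm_num
      rw [phiW_append]
      simp [phiW_cons, phiW_nil, phi]

lemma pbis_rec (k : ℕ) : pbis (k+3) = phiW (pbis (k+2)) ++ [false] := by
  have h1 : fibw (k+3) = phiW (fibw (k+2)) := fibw_succ (k+2) (by omega)
  have h2 := fibw_eq k
  have h3 := fibw_eq (k+1)
  rcases Nat.even_or_odd k with he | ho
  · have hk : k % 2 = 0 := Nat.even_iff.mp he
    have hk1 : (k+1) % 2 = 1 := by omega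
    rw [hk] at h2; rw [hk1] at h3; norm_num at h2 h3
    rw [h2, phiW_append] at h1
    have : phiW [false, true] = [false, true, false] := rfl
    rw [this] at h1
    rw [h3] at h1
    have h4 : pbis (k+1+2) ++ [true, false] = (phiW (pbis (k+2)) ++ [false]) ++ [true, false] := by
      rw [h1]; simp
    have := List.append_inj_left' h4 rfl
    simpa using this
  · have hk : k % 2 = 1 := Nat.odd_iff.mp ho
    have hk1 : (k+1) % 2 = 0 := by omega
    rw [hk] at h2; rw [hk1] at h3; norm_num at h2 h3
    rw [h2, phiW_append] at h1
    have : phiW [true, false] = [false, false, true] := rfl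
    rw [this] at h1
    rw [h3] at h1
    have h4 : pbis (k+1+2) ++ [false, true] = (phiW (pbis (k+2)) ++ [false]) ++ [false, true] := by
      rw [h1]; simp
    have := List.append_inj_left' h4 rfl
    simpa using this

lemma dF_rec_even (n : ℕ) (h2 : 2 ≤ n) (he : n % 2 = 0) :
    dF (n+1) = phiW (dF n) ++ [false] := by
  obtain ⟨k, rfl⟩ : ∃ k, n = k + 2 := ⟨n - 2, by omega⟩
  have h1 : (k+2+1) % 2 = 1 := by omega
  unfold dF
  rw [he, h1]; norm_num
  rw [pbis_rec k]
  simp [phiW_append, phiW_cons, phiW_nil, phi]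

lemma dF_rec_odd (n : ℕ) (h2 : 2 ≤ n) (ho : n % 2 = 1) :
    phiW (dF n) = false :: dF (n+1) := by
  obtain ⟨k, rfl⟩ : ∃ k, n = k + 2 := ⟨n - 2, by omega⟩
  have h1 : (k+2+1) % 2 = 0 := by omega
  unfold dF
  rw [ho, h1]; norm_num
  rw [pbis_rec k]
  simp [phiW_append, phiW_cons, phiW_nil, phi]

lemma two_le_dF_length (n : ℕ) : 2 ≤ (dF n).length := by
  unfold dF; split <;> simp

lemma desub (n : ℕ) (h2 : 2 ≤ n) (w : List Bool) :
    dF (n+1) <:+: phiW w → dF n <:+: w := by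
  intro hinf
  obtain ⟨x, y, hxy⟩ := hinf
  rcases Nat.even_or_odd n with he | ho
  · -- n even: dF (n+1) = phiW (dF n) ++ [false]
    have hne : n % 2 = 0 := Nat.even_iff.mp he
    rw [dF_rec_even n h2 hne] at hxy
    have hd : ∃ r, dF n = true :: r := by
      refine ⟨pbis n ++ [true], ?_⟩; unfold dF; rw [hne]; simp
    obtain ⟨r, hr⟩ := hd
    have hh : ∃ t, phiW (dF n) = false :: t := by rw [hr]; exact phiW_head _ _
    obtain ⟨t, ht⟩ := hh
    have heq : phiW w = x ++ (phiW (dF n) ++ false :: y) := by rw [← hxy]; simp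
    obtain ⟨u, v, hw, hu, hv⟩ := phiW_split w x _ heq
      (Or.inr (Or.inl (by rw [ht]; simp)))
    obtain ⟨v1, v2, hv12, hv1, hv2⟩ := phiW_split v (phiW (dF n)) (false :: y) hv
      (Or.inr (Or.inl rfl))
    have : v1 = dF n := phiW_inj v1 (dF n) hv1
    exact ⟨u, v2, by rw [hw, hv12, this]; simp⟩
  · -- n odd: phiW (dF n) = false :: dF (n+1)
    have hno : n % 2 = 1 := Nat.odd_iff.mp ho
    have hrec := dF_rec_odd n h2 hno
    have hd1 : ∃ r, dF (n+1) = true :: r := by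
      refine ⟨pbis (n+1) ++ [true], ?_⟩
      unfold dF; rw [show (n+1) % 2 = 0 by omega]; simp
    obtain ⟨r, hr⟩ := hd1
    rcases List.eq_nil_or_concat x with rfl | ⟨x', c, rfl⟩
    · -- x = [] : phiW w starts with true, impossible
      exfalso
      rw [hr] at hxy
      cases w with
      | nil => rw [phiW_nil] at hxy; exact absurd hxy.symm (by simp)
      | cons a w' =>
        obtain ⟨t, ht⟩ := phiW_head a w'
        rw [ht] at hxy; simp at hxy
    · cases c with
      | true =>
        exfalso
        rw [hr] at hxy
        exact no11 w x' (r ++ y) (by rw [← hxy]; simp)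
      | false =>
        have heq : phiW w = x' ++ (phiW (dF n) ++ y) := by
          rw [← hxy, hrec]; simp
        have hh : ∃ t, phiW (dF n) = false :: t := by
          have : ∃ r', dF n = false :: r' := by
            refine ⟨pbis n ++ [false], ?_⟩; unfold dF; rw [hno]; simp
          obtain ⟨r', hr'⟩ := this
          rw [hr']; exact phiW_head _ _
        obtain ⟨t, ht⟩ := hh
        obtain ⟨u, v, hw, hu, hv⟩ := phiW_split w x' _ heq
          (Or.inr (Or.inl (by rw [ht]; simp)))
        have hlast : (phiW (dF n)).getLast? = some true := by
          have : dF n = (false :: pbis n) ++ [false] := by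
            unfold dF; rw [hno]; norm_num
          rw [this, phiW_append, show phiW [false] = [false, true] from rfl,
            show ∀ A : List Bool, A ++ [false,true] = (A ++ [false]) ++ [true]
              from fun A => by simp]
          exact List.getLast?_concat
        obtain ⟨v1, v2, hv12, hv1, hv2⟩ := phiW_split v (phiW (dF n)) y hv
          (Or.inr (Or.inr hlast))
        have : v1 = dF n := phiW_inj v1 (dF n) hv1
        exact ⟨u, v2, by rw [hw, hv12, this]; simp⟩

lemma dF_not_infix (n : ℕ) (h : 2 ≤ n) : ∀ m, ¬ dF n <:+: fibw m := by
  induction n, h using Nat.le_induction with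
  | base =>
    intro m hinf
    have hd2 : dF 2 = [true, true] := by decide
    rw [hd2] at hinf
    match m with
    | 0 => have := hinf.length_le; simp [fibw] at this
    | 1 => have := hinf.length_le; simp [fibw] at this
    | (m'+2) =>
      rw [fibw_succ (m'+1) (by omega)] at hinf
      obtain ⟨x, y, hxy⟩ := hinf
      exact no11 (fibw (m'+1)) x y (by rw [← hxy]; simp)
  | succ n hn IH =>
    intro m hinf
    have hl := hinf.length_le
    have hl2 := two_le_dF_length (n+1)
    match m with
    | 0 => simp [fibw] at hl; omega
    | 1 => simp [fibw] at hl; omega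
    | (m'+2) =>
      rw [fibw_succ (m'+1) (by omega)] at hinf
      exact IH (m'+1) (desub n hn (fibw (m'+1)) hinf)

lemma phiW_length_ge (w : List Bool) : w.length ≤ (phiW w).length := by
  induction w with
  | nil => simp [phiW_nil]
  | cons a w' IH =>
    rw [phiW_cons, List.length_append]
    cases a <;> simp [phi] <;> omega

lemma fibw_grow (m : ℕ) :
    m + 1 ≤ (phiW^[m] [false]).length ∧ ∃ t, phiW^[m] [false] = false :: t := by
  induction m with
  | zero => exact ⟨by simp, [], rfl⟩
  | succ m IH =>
    obtain ⟨hlen, t, ht⟩ := IH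
    rw [Function.iterate_succ_apply' phiW m [false], ht]
    constructor
    · have h1 : t.length ≤ (phiW t).length := phiW_length_ge t
      have h2 : m + 1 ≤ t.length + 1 := by
        have := hlen; rw [ht] at this; simpa using this
      simp [phiW_cons, phi]
      omega
    · exact ⟨true :: phiW t, rfl⟩

/-- The finite word `u` is a prefix of the infinite word `x`. -/
def IsPrefixI (u : List Bool) (x : ℕ → Bool) : Prop :=
  ∀ i, i < u.length → u.getD i false = x i

/-- `f` is the Fibonacci word: every `φ^n(0)` is a prefix of `f`. -/
def IsFibWord (f : ℕ → Bool) : Prop :=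
  ∀ n, IsPrefixI (phiW^[n] [false]) f

/-- The finite word `u` is a factor of the infinite word `x`. -/
def IsFactorI (u : List Bool) (x : ℕ → Bool) : Prop :=
  ∃ k, ∀ i, i < u.length → u.getD i false = x (k + i)

theorem fib_forbidden_words_not_factors (f : ℕ → Bool) (hf : IsFibWord f)
    (n : ℕ) (hn : 2 ≤ n) : ¬ IsFactorI (dF n) f := by
  rintro ⟨k, hk⟩
  set L := dF n with hL
  set m := k + L.length with hm
  set l := phiW^[m] [false] with hl
  have hgrow := fibw_grow m
  have hlen : k + L.length < l.length := by
    have := hgrow.1; rw [← hl] at this; omega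
  have hpre : ∀ i, i < l.length → l.getD i false = f i := hf m
  have hfibw : fibw (m+1) = l := by
    show phiW^[m+1-1] [false] = l
    simp [hl]
  have key : L = (l.drop k).take L.length := by
    apply List.ext_getElem
    · rw [List.length_take, List.length_drop]; omega
    · intro i h1 h2
      have hkil : k + i < l.length := by omega
      have e1 : ((l.drop k).take L.length)[i] = l[k + i] := by
        rw [List.getElem_take, List.getElem_drop]
      rw [e1]
      have e2 : l[k+i] = l.getD (k+i) false := (List.getD_eq_getElem l false hkil).symm
      have e3 : L[i] = L.getD i false := (List.getD_eq_getElem L false h1).symm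
      rw [e2, e3, hpre (k+i) hkil, hk i h1]
  have hinf : L <:+: fibw (m+1) := by
    rw [hfibw, key]
    exact ((List.take_prefix _ _).isInfix).trans (List.drop_suffix k l).isInfix
  exact dF_not_infix n hn (m+1) hinf
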